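/- Let G be a simple graph, let k ≥ 1 be an integer, and let H be the (2k)-subdivision of G. Then for every independent set S of H there exists an independent set S' of H with |S'| ≥ |S| such that for every edge e of G, S' contains exactly k of the 2k inner path nodes of e; consequently, for every edge e of G at most one of its two endpoints belongs to S'. -/

import Mathlib

/-- A set of vertices is independent if no two of its elements are adjacent. -/
def IsIndepSet {V : Type*} (G : SimpleGraph V) (S : Set V) : Prop :=
  ∀ u ∈ S, ∀ w ∈ S, ¬ G.Adj u w

/-- `H` is the `(2k)`-subdivision of `G`: every edge `e = {u,v}` of `G` is replaced by
a path `(u, w^e_1, …, w^e_{2k}, v)` with `2k` new inner vertices, distinct inner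
vertices for distinct edges. -/
structure IsSubdivision2k {V W : Type*} (G : SimpleGraph V) (k : ℕ) (H : SimpleGraph W) where
  /-- images of the original vertices -/
  vmap : V → W
  /-- the inner path nodes of each edge -/
  inner : G.edgeSet → Fin (2 * k) → W
  /-- a choice of the two endpoints of each edge -/
  ends : G.edgeSet → V × V
  ends_eq : ∀ e : G.edgeSet, (e : Sym2 V) = s((ends e).1, (ends e).2)
  vmap_inj : Function.Injective vmap
  inner_inj : Function.Injective fun pr : G.edgeSet × Fin (2 * k) => inner pr.1 pr.2
  vmap_ne_inner : ∀ (a : V) (e : G.edgeSet) (i : Fin (2 * k)), vmap a ≠ inner e i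
  cover : ∀ w : W, (∃ a : V, w = vmap a) ∨ ∃ (e : G.edgeSet) (i : Fin (2 * k)), w = inner e i
  adj_iff : ∀ x y : W, H.Adj x y ↔
    (∃ (e : G.edgeSet) (i j : Fin (2 * k)), (i : ℕ) + 1 = (j : ℕ) ∧
        ((x = inner e i ∧ y = inner e j) ∨ (x = inner e j ∧ y = inner e i))) ∨
    (∃ (e : G.edgeSet) (i : Fin (2 * k)), (i : ℕ) = 0 ∧
        ((x = vmap (ends e).1 ∧ y = inner e i) ∨ (y = vmap (ends e).1 ∧ x = inner e i))) ∨
    (∃ (e : G.edgeSet) (i : Fin (2 * k)), (i : ℕ) = 2 * k - 1 ∧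
        ((x = vmap (ends e).2 ∧ y = inner e i) ∨ (y = vmap (ends e).2 ∧ x = inner e i)))

/-- for every independent set `S` of the `(2k)`-subdivision `H` of `G`
there is an independent set `S'` of `H` with `|S'| ≥ |S|` containing exactly `k` of
the `2k` inner path nodes of every edge of `G`; consequently for every edge of `G`
at most one of its two endpoints belongs to `S'`. -/

private lemma aux_nocons_card (F : Finset ℕ) (m n : ℕ)
    (hmem : ∀ i ∈ F, m ≤ i ∧ i < n) (hcons : ∀ i ∈ F, i + 1 ∉ F) :
    F.card ≤ (n - m + 1) / 2 := by
  classical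
  calc F.card ≤ (Finset.range ((n - m + 1) / 2)).card := by
        refine Finset.card_le_card_of_injOn (fun i => (i - m) / 2) ?_ ?_
        · intro i hi
          rw [Finset.mem_coe, Finset.mem_range]
          have := hmem i hi
          show (i - m) / 2 < (n - m + 1) / 2
          omega
        · intro i hi j hj h
          have hi' := hmem i (Finset.mem_coe.1 hi)
          have hj' := hmem j (Finset.mem_coe.1 hj)
          by_contra hne
          have hcase : j = i + 1 ∨ i = j + 1 := by
            simp only at h
            omega
          rcases hcase with rfl | rfl
          · exact hcons i (Finset.mem_coe.1 hi) (Finset.mem_coe.1 hj)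
          · exact hcons j (Finset.mem_coe.1 hj) (Finset.mem_coe.1 hi)
    _ = (n - m + 1) / 2 := Finset.card_range _

private lemma aux_ncard_iUnion {ι α : Type*} [Fintype ι] [Fintype α] (f : ι → Set α)
    (h : ∀ i j, i ≠ j → Disjoint (f i) (f j)) :
    (⋃ i, f i).ncard = ∑ i, (f i).ncard := by
  classical
  rw [Set.ncard_eq_toFinset_card']
  have heq : (⋃ i, f i).toFinset = Finset.univ.biUnion fun i => (f i).toFinset := by
    ext x; simp
  rw [heq, Finset.card_biUnion]
  · exact Finset.sum_congr rfl fun i _ => (Set.ncard_eq_toFinset_card' _).symm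
  · intro i _ j _ hij
    exact Set.disjoint_toFinset.2 (h i j hij)

private lemma aux_parity_ncard (k r : ℕ) (hr : r < 2) :
    ({i : Fin (2 * k) | (i : ℕ) % 2 = r}).ncard = k := by
  have hset : {i : Fin (2 * k) | (i : ℕ) % 2 = r} =
      (fun j : Fin k => (⟨2 * (j : ℕ) + r, by have := j.isLt; omega⟩ : Fin (2 * k))) ''
        Set.univ := by
    rw [Set.image_univ]
    ext i
    simp only [Set.mem_setOf_eq, Set.mem_range]
    constructor
    · intro h
      have hi := i.isLt
      refine ⟨⟨(i : ℕ) / 2, by omega⟩, ?_⟩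
      apply Fin.ext
      show 2 * ((i : ℕ) / 2) + r = (i : ℕ)
      omega
    · rintro ⟨j, rfl⟩
      show (2 * (j : ℕ) + r) % 2 = r
      omega
  rw [hset, Set.ncard_image_of_injective _ ?_, Set.ncard_univ, Nat.card_eq_fintype_card,
    Fintype.card_fin]
  intro a b hab
  have h2 : 2 * (a : ℕ) + r = 2 * (b : ℕ) + r := congrArg Fin.val hab
  exact Fin.ext (by omega)

theorem indep_subdivision_normalize {V W : Type*} [Fintype V] [Fintype W]
    (G : SimpleGraph V) (k : ℕ) (hk : 1 ≤ k) (H : SimpleGraph W)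
    (sub : IsSubdivision2k G k H)
    (S : Set W) (hS : IsIndepSet H S) :
    ∃ S' : Set W, IsIndepSet H S' ∧ S.ncard ≤ S'.ncard ∧
      (∀ e : G.edgeSet, (S' ∩ Set.range (sub.inner e)).ncard = k) ∧
      (∀ e : G.edgeSet,
        ¬ (sub.vmap (sub.ends e).1 ∈ S' ∧ sub.vmap (sub.ends e).2 ∈ S')) := by
  classical
  haveI : Fintype G.edgeSet := (Set.toFinite G.edgeSet).fintype
  set Vm : Set W := Set.range sub.vmap with hVmdef
  have hinner_ne_Vm : ∀ (e : G.edgeSet) (i : Fin (2 * k)), sub.inner e i ∉ Vm := by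
    rintro e i ⟨a, ha⟩
    exact sub.vmap_ne_inner a e i ha
  have hinner_inj : ∀ (e e' : G.edgeSet) (i i' : Fin (2 * k)),
      sub.inner e i = sub.inner e' i' → e = e' ∧ i = i' := by
    intro e e' i i' h
    have h2 := sub.inner_inj (a₁ := (e, i)) (a₂ := (e', i')) h
    exact ⟨congrArg Prod.fst h2, congrArg Prod.snd h2⟩
  have hinner_e_inj : ∀ e : G.edgeSet, Function.Injective (sub.inner e) :=
    fun e i i' h => (hinner_inj e e i i' h).2
  set A : Set W := S ∩ Vm with hAdef
  set bad : G.edgeSet → Prop :=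
    fun e => sub.vmap (sub.ends e).1 ∈ S ∧ sub.vmap (sub.ends e).2 ∈ S with hbaddef
  set R : Set W := (fun e : G.edgeSet => sub.vmap (sub.ends e).2) '' {e | bad e} with hRdef
  set A' : Set W := A \ R with hA'def
  set Je : G.edgeSet → Set (Fin (2 * k)) := fun e =>
    {i | (i : ℕ) % 2 = (if sub.vmap (sub.ends e).1 ∈ A' then 1 else 0)} with hJedef
  set S' : Set W := A' ∪ ⋃ e : G.edgeSet, sub.inner e '' Je e with hS'def
  have hA'sub : A' ⊆ S := fun x hx => hx.1.1
  have hA'Vm : A' ⊆ Vm := fun x hx => hx.1.2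
  -- membership characterizations
  have memS'_inner : ∀ (e : G.edgeSet) (i : Fin (2 * k)), sub.inner e i ∈ S' ↔ i ∈ Je e := by
    intro e i
    constructor
    · rintro (h | h)
      · exact absurd (hA'Vm h) (hinner_ne_Vm e i)
      · simp only [Set.mem_iUnion, Set.mem_image] at h
        obtain ⟨e', i', hi', heq⟩ := h
        obtain ⟨rfl, rfl⟩ := hinner_inj e' e i' i heq
        exact hi'
    · intro h
      exact Or.inr (Set.mem_iUnion.2 ⟨e, Set.mem_image_of_mem _ h⟩)
  have memS'_vmap : ∀ a : V, sub.vmap a ∈ S' → sub.vmap a ∈ A' := by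
    rintro a (h | h)
    · exact h
    · exfalso
      simp only [Set.mem_iUnion, Set.mem_image] at h
      obtain ⟨e, i, -, heq⟩ := h
      exact sub.vmap_ne_inner a e i heq.symm
  have hJe_mem : ∀ (e : G.edgeSet) (i : Fin (2 * k)), i ∈ Je e ↔
      (i : ℕ) % 2 = (if sub.vmap (sub.ends e).1 ∈ A' then 1 else 0) := by
    intro e i; rw [hJedef]; rfl
  -- independence
  have hindep : IsIndepSet H S' := by
    intro u hu w hw hadj
    rw [sub.adj_iff] at hadj
    rcases hadj with ⟨e, i, j, hij, hc⟩ | ⟨e, i, hi0, hc⟩ | ⟨e, i, hik, hc⟩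
    · have hiJ : i ∈ Je e ∧ j ∈ Je e := by
        rcases hc with ⟨rfl, rfl⟩ | ⟨rfl, rfl⟩
        · exact ⟨(memS'_inner e i).1 hu, (memS'_inner e j).1 hw⟩
        · exact ⟨(memS'_inner e i).1 hw, (memS'_inner e j).1 hu⟩
      have h1 := (hJe_mem e i).1 hiJ.1
      have h2 := (hJe_mem e j).1 hiJ.2
      by_cases h : sub.vmap (sub.ends e).1 ∈ A' <;>
        [rw [if_pos h] at h1 h2; rw [if_neg h] at h1 h2] <;> omega
    · have h1 : sub.vmap (sub.ends e).1 ∈ S' ∧ sub.inner e i ∈ S' := by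
        rcases hc with ⟨rfl, rfl⟩ | ⟨rfl, rfl⟩
        · exact ⟨hu, hw⟩
        · exact ⟨hw, hu⟩
      have hA := memS'_vmap _ h1.1
      have hJ := (hJe_mem e i).1 ((memS'_inner e i).1 h1.2)
      rw [if_pos hA] at hJ
      omega
    · have h1 : sub.vmap (sub.ends e).2 ∈ S' ∧ sub.inner e i ∈ S' := by
        rcases hc with ⟨rfl, rfl⟩ | ⟨rfl, rfl⟩
        · exact ⟨hu, hw⟩
        · exact ⟨hw, hu⟩
      have hA := memS'_vmap _ h1.1
      have hJ := (hJe_mem e i).1 ((memS'_inner e i).1 h1.2)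
      by_cases h : sub.vmap (sub.ends e).1 ∈ A'
      · exact hA.2 ⟨e, ⟨hA'sub h, hA'sub hA⟩, rfl⟩
      · rw [if_neg h] at hJ
        omega
  -- the inner part of S' on each edge
  have hSplitInner : ∀ e : G.edgeSet,
      S' ∩ Set.range (sub.inner e) = sub.inner e '' Je e := by
    intro e
    ext x
    constructor
    · rintro ⟨hx, i, rfl⟩
      exact ⟨i, (memS'_inner e i).1 hx, rfl⟩
    · rintro ⟨i, hi, rfl⟩
      exact ⟨(memS'_inner e i).2 hi, i, rfl⟩
  have hExact : ∀ e : G.edgeSet, (S' ∩ Set.range (sub.inner e)).ncard = k := by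
    intro e
    rw [hSplitInner e, Set.ncard_image_of_injective _ (hinner_e_inj e)]
    by_cases h : sub.vmap (sub.ends e).1 ∈ A'
    · have : Je e = {i : Fin (2 * k) | (i : ℕ) % 2 = 1} := by
        rw [hJedef]; simp only [if_pos h]
      rw [this]; exact aux_parity_ncard k 1 (by norm_num)
    · have : Je e = {i : Fin (2 * k) | (i : ℕ) % 2 = 0} := by
        rw [hJedef]; simp only [if_neg h]
      rw [this]; exact aux_parity_ncard k 0 (by norm_num)
  -- endpoints
  have hEnds : ∀ e : G.edgeSet,
      ¬(sub.vmap (sub.ends e).1 ∈ S' ∧ sub.vmap (sub.ends e).2 ∈ S') := by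
    rintro e ⟨h1, h2⟩
    have h1' := memS'_vmap _ h1
    have h2' := memS'_vmap _ h2
    exact h2'.2 ⟨e, ⟨hA'sub h1', hA'sub h2'⟩, rfl⟩
  -- counting
  have hsplit : ∀ T : Set W,
      T.ncard = (T ∩ Vm).ncard + ∑ e : G.edgeSet, (T ∩ Set.range (sub.inner e)).ncard := by
    intro T
    have h1 : (T ∩ Vm).ncard + (T \ Vm).ncard = T.ncard :=
      Set.ncard_inter_add_ncard_diff_eq_ncard T Vm (Set.toFinite T)
    have h2 : T \ Vm = ⋃ e : G.edgeSet, (T ∩ Set.range (sub.inner e)) := by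
      ext x
      constructor
      · rintro ⟨hxT, hxVm⟩
        rcases sub.cover x with ⟨a, rfl⟩ | ⟨e, i, rfl⟩
        · exact absurd ⟨a, rfl⟩ hxVm
        · exact Set.mem_iUnion.2 ⟨e, hxT, i, rfl⟩
      · intro hx
        obtain ⟨e, hxT, i, rfl⟩ := Set.mem_iUnion.1 hx
        exact ⟨hxT, hinner_ne_Vm e i⟩
    rw [← h1, h2, aux_ncard_iUnion]
    intro e e' hee
    refine Set.disjoint_left.2 ?_
    rintro x ⟨-, i, rfl⟩ ⟨-, i', heq⟩
    exact hee ((hinner_inj e' e i' i heq).1).symm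
  have hS'Vm : S' ∩ Vm = A' := by
    ext x
    constructor
    · rintro ⟨hx, hv⟩
      rcases hx with h | h
      · exact h
      · exfalso
        simp only [Set.mem_iUnion, Set.mem_image] at h
        obtain ⟨e, i, -, rfl⟩ := h
        exact hinner_ne_Vm e i hv
    · intro hx
      exact ⟨Or.inl hx, hA'Vm hx⟩
  have hIbound : ∀ e : G.edgeSet,
      (S ∩ Set.range (sub.inner e)).ncard + (if bad e then 1 else 0) ≤ k := by
    intro e
    have hIeq : S ∩ Set.range (sub.inner e) = sub.inner e '' {i | sub.inner e i ∈ S} := by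
      ext x
      constructor
      · rintro ⟨hx, i, rfl⟩
        exact ⟨i, hx, rfl⟩
      · rintro ⟨i, hi, rfl⟩
        exact ⟨hi, i, rfl⟩
    rw [hIeq, Set.ncard_image_of_injective _ (hinner_e_inj e)]
    set Te : Set (Fin (2 * k)) := {i | sub.inner e i ∈ S} with hTedef
    set F : Finset ℕ := Te.toFinset.image Fin.val with hFdef
    have hcardF : F.card = Te.ncard := by
      rw [hFdef, Finset.card_image_of_injective _ Fin.val_injective,
        Set.ncard_eq_toFinset_card']
    have hmemF : ∀ i : ℕ, i ∈ F → ∃ a : Fin (2 * k), a ∈ Te ∧ (a : ℕ) = i := by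
      intro i hi
      rw [hFdef] at hi
      simp only [Finset.mem_image, Set.mem_toFinset] at hi
      exact hi
    have hnc : ∀ i ∈ F, i + 1 ∉ F := by
      intro i hi hi1
      obtain ⟨a, haS, hav⟩ := hmemF i hi
      obtain ⟨b, hbS, hbv⟩ := hmemF (i + 1) hi1
      have hadj : H.Adj (sub.inner e a) (sub.inner e b) := by
        rw [sub.adj_iff]
        exact Or.inl ⟨e, a, b, by omega, Or.inl ⟨rfl, rfl⟩⟩
      exact hS _ haS _ hbS hadj
    by_cases hb : bad e
    · rw [if_pos hb]
      have h0 : ∀ i ∈ F, 1 ≤ i ∧ i < 2 * k - 1 := by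
        intro i hi
        obtain ⟨a, haS, rfl⟩ := hmemF i hi
        have halt := a.isLt
        constructor
        · by_contra h
          push_neg at h
          have ha0 : (a : ℕ) = 0 := by omega
          have hadj : H.Adj (sub.vmap (sub.ends e).1) (sub.inner e a) := by
            rw [sub.adj_iff]
            exact Or.inr (Or.inl ⟨e, a, ha0, Or.inl ⟨rfl, rfl⟩⟩)
          exact hS _ hb.1 _ haS hadj
        · by_contra h
          push_neg at h
          have ha1 : (a : ℕ) = 2 * k - 1 := by omega
          have hadj : H.Adj (sub.vmap (sub.ends e).2) (sub.inner e a) := by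
            rw [sub.adj_iff]
            exact Or.inr (Or.inr ⟨e, a, ha1, Or.inl ⟨rfl, rfl⟩⟩)
          exact hS _ hb.2 _ haS hadj
      have hle := aux_nocons_card F 1 (2 * k - 1) h0 hnc
      omega
    · rw [if_neg hb]
      have h0 : ∀ i ∈ F, 0 ≤ i ∧ i < 2 * k := by
        intro i hi
        obtain ⟨a, haS, rfl⟩ := hmemF i hi
        exact ⟨Nat.zero_le _, a.isLt⟩
      have hle := aux_nocons_card F 0 (2 * k) h0 hnc
      omega
  have hAbound : A.ncard ≤ A'.ncard + ∑ e : G.edgeSet, (if bad e then 1 else 0) := by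
    have hsub2 : A ⊆ A' ∪ R := fun x hx =>
      (em (x ∈ R)).elim (fun h => Or.inr h) (fun h => Or.inl ⟨hx, h⟩)
    calc A.ncard ≤ (A' ∪ R).ncard := Set.ncard_le_ncard hsub2 (Set.toFinite _)
      _ ≤ A'.ncard + R.ncard := Set.ncard_union_le _ _
      _ ≤ A'.ncard + ({e : G.edgeSet | bad e}).ncard := by
          have : R.ncard ≤ ({e : G.edgeSet | bad e}).ncard := by
            rw [hRdef]
            exact Set.ncard_image_le (Set.toFinite _)
          omega
      _ = A'.ncard + ∑ e : G.edgeSet, (if bad e then 1 else 0) := by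
          congr 1
          rw [Set.ncard_eq_toFinset_card', Set.toFinset_setOf, Finset.card_filter]
  have hsum : (∑ e : G.edgeSet, (S ∩ Set.range (sub.inner e)).ncard) +
      (∑ e : G.edgeSet, (if bad e then 1 else 0)) ≤ ∑ _e : G.edgeSet, k := by
    rw [← Finset.sum_add_distrib]
    exact Finset.sum_le_sum fun e _ => hIbound e
  have hcard : S.ncard ≤ S'.ncard := by
    rw [hsplit S, hsplit S', hS'Vm]
    have h2 : (∑ e : G.edgeSet, (S' ∩ Set.range (sub.inner e)).ncard) =
        ∑ _e : G.edgeSet, k := Finset.sum_congr rfl fun e _ => hExact e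
    rw [h2, ← hAdef]
    linarith [hAbound, hsum]
  exact ⟨S', hindep, hcard, hExact, hEnds⟩
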